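/- arXiv:1605.05076 — 3 statements merged into one kernel-verified Lean document; each statement's English description precedes it below -/
import Mathlib

section
/- (Second family, Case λ₂ = λ₃ = 0, λ₁ ≠ 0) Under the ruled hypothesis Q = −uP, u_y + u·u_x = 0, suppose Δx = λ₁·x, Δy = λ₂·y, Δf = λ₃·f on D for real constants with λ₂ = λ₃ = 0, λ₁ ≠ 0, and suppose P is nowhere zero on D. Then u·H₁ = −W, i.e. u·(f_xx + f_yy) = −(1 + P²(1 + u²)) on D (in particular u is nowhere zero), and moreover −P(1 + u²)/(uW²) = λ₁·x and 2/(uW²) = λ₁·xy on D. -/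
noncomputable section

/-- Partial derivative with respect to the first (x) variable. -/
def pdx (f : ℝ × ℝ → ℝ) : ℝ × ℝ → ℝ := fun p => fderiv ℝ f p (1, 0)

/-- Partial derivative with respect to the second (y) variable. -/
def pdy (f : ℝ × ℝ → ℝ) : ℝ × ℝ → ℝ := fun p => fderiv ℝ f p (0, 1)

/-- `P = f_x + y/2`. -/
def Pf (f : ℝ × ℝ → ℝ) : ℝ × ℝ → ℝ := fun p => pdx f p + p.2 / 2

/-- `Q = f_y - x/2`. -/
def Qf (f : ℝ × ℝ → ℝ) : ℝ × ℝ → ℝ := fun p => pdy f p - p.1 / 2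

/-- First fundamental form coefficient `E = 1 + P²`. -/
def Ef (f : ℝ × ℝ → ℝ) : ℝ × ℝ → ℝ := fun p => 1 + Pf f p ^ 2

/-- First fundamental form coefficient `F = P·Q`. -/
def Ff (f : ℝ × ℝ → ℝ) : ℝ × ℝ → ℝ := fun p => Pf f p * Qf f p

/-- First fundamental form coefficient `G = 1 + Q²`. -/
def Gf (f : ℝ × ℝ → ℝ) : ℝ × ℝ → ℝ := fun p => 1 + Qf f p ^ 2

/-- `W = √(EG − F²) = √(1 + P² + Q²)`. -/
def Wf (f : ℝ × ℝ → ℝ) : ℝ × ℝ → ℝ := fun p => Real.sqrt (1 + Pf f p ^ 2 + Qf f p ^ 2)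

/-- Second fundamental form coefficient `L = (f_xx + PQ)/W`. -/
def Lf (f : ℝ × ℝ → ℝ) : ℝ × ℝ → ℝ := fun p => (pdx (pdx f) p + Pf f p * Qf f p) / Wf f p

/-- Second fundamental form coefficient `M = (f_xy + (Q² − P²)/2)/W`. -/
def Mf (f : ℝ × ℝ → ℝ) : ℝ × ℝ → ℝ :=
  fun p => (pdx (pdy f) p + (Qf f p ^ 2 - Pf f p ^ 2) / 2) / Wf f p

/-- Second fundamental form coefficient `N = (f_yy − PQ)/W`. -/
def Nf (f : ℝ × ℝ → ℝ) : ℝ × ℝ → ℝ := fun p => (pdy (pdy f) p - Pf f p * Qf f p) / Wf f p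

/-- Mean curvature `H = (EN − 2FM + GL)/(2W²)`. -/
def Hf (f : ℝ × ℝ → ℝ) : ℝ × ℝ → ℝ :=
  fun p => (Ef f p * Nf f p - 2 * Ff f p * Mf f p + Gf f p * Lf f p) / (2 * Wf f p ^ 2)

/-- The Laplace–Beltrami operator of the graph of `f`, with the sign convention
`Δφ = −(1/W)[∂_x((G φ_x − F φ_y)/W) + ∂_y((−F φ_x + E φ_y)/W)]`. -/
def lapS (f φ : ℝ × ℝ → ℝ) : ℝ × ℝ → ℝ := fun p =>
  -(1 / Wf f p) *
    (pdx (fun q => (Gf f q * pdx φ q - Ff f q * pdy φ q) / Wf f q) p +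
     pdy (fun q => (-(Ff f q) * pdx φ q + Ef f q * pdy φ q) / Wf f q) p)

/-- Mean curvature in the form `H = (f_xx + f_yy)/(2W³)`. -/
def Hm (f : ℝ × ℝ → ℝ) : ℝ × ℝ → ℝ :=
  fun p => (pdx (pdx f) p + pdy (pdy f) p) / (2 * Wf f p ^ 3)

/-- `H₁ = (f_xx + f_yy)/W`. -/
def H1f (f : ℝ × ℝ → ℝ) : ℝ × ℝ → ℝ :=
  fun p => (pdx (pdx f) p + pdy (pdy f) p) / Wf f p

def HasPD (g : ℝ × ℝ → ℝ) (gx gy : ℝ) (p : ℝ × ℝ) : Prop :=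
  ∃ L : ℝ × ℝ →L[ℝ] ℝ, HasFDerivAt g L p ∧ L (1, 0) = gx ∧ L (0, 1) = gy

namespace HasPD

variable {g h : ℝ × ℝ → ℝ} {gx gy hx hy : ℝ} {p : ℝ × ℝ}

theorem pdx_eq (hg : HasPD g gx gy p) : pdx g p = gx := by
  obtain ⟨L, hL, h1, h2⟩ := hg
  simp only [pdx, hL.fderiv, h1]

theorem pdy_eq (hg : HasPD g gx gy p) : pdy g p = gy := by
  obtain ⟨L, hL, h1, h2⟩ := hg
  simp only [pdy, hL.fderiv, h2]

theorem congr_fun (hg : HasPD g gx gy p) (he : ∀ q, h q = g q) : HasPD h gx gy p := by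
  obtain ⟨L, hL, h1, h2⟩ := hg
  exact ⟨L, hL.congr_of_eventuallyEq (Filter.Eventually.of_forall he), h1, h2⟩

theorem congr_deriv (hg : HasPD g gx gy p) (e1 : gx = hx) (e2 : gy = hy) :
    HasPD g hx hy p := e1 ▸ e2 ▸ hg

theorem unique (h1 : HasPD g gx gy p) (h2 : HasPD g hx hy p) : gx = hx ∧ gy = hy := by
  obtain ⟨L, hL, hL1, hL2⟩ := h1
  obtain ⟨M, hM, hM1, hM2⟩ := h2
  have : L = M := hL.unique hM
  subst this
  exact ⟨hL1.symm.trans hM1, hL2.symm.trans hM2⟩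

theorem const (c : ℝ) (p : ℝ × ℝ) : HasPD (fun _ => c) 0 0 p :=
  ⟨0, hasFDerivAt_const _ _, rfl, rfl⟩

theorem fst (p : ℝ × ℝ) : HasPD (fun q => q.1) 1 0 p :=
  ⟨ContinuousLinearMap.fst ℝ ℝ ℝ, hasFDerivAt_fst, rfl, rfl⟩

theorem snd (p : ℝ × ℝ) : HasPD (fun q => q.2) 0 1 p :=
  ⟨ContinuousLinearMap.snd ℝ ℝ ℝ, hasFDerivAt_snd, rfl, rfl⟩

theorem add (hg : HasPD g gx gy p) (hh : HasPD h hx hy p) :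
    HasPD (fun q => g q + h q) (gx + hx) (gy + hy) p := by
  obtain ⟨L, hL, hL1, hL2⟩ := hg
  obtain ⟨M, hM, hM1, hM2⟩ := hh
  exact ⟨L + M, hL.add hM, by simp [hL1, hM1], by simp [hL2, hM2]⟩

theorem neg (hg : HasPD g gx gy p) : HasPD (fun q => -g q) (-gx) (-gy) p := by
  obtain ⟨L, hL, hL1, hL2⟩ := hg
  exact ⟨-L, hL.neg, by simp [hL1], by simp [hL2]⟩

theorem sub (hg : HasPD g gx gy p) (hh : HasPD h hx hy p) :
    HasPD (fun q => g q - h q) (gx - hx) (gy - hy) p := by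
  obtain ⟨L, hL, hL1, hL2⟩ := hg
  obtain ⟨M, hM, hM1, hM2⟩ := hh
  exact ⟨L - M, hL.sub hM, by simp [hL1, hM1], by simp [hL2, hM2]⟩

theorem mul (hg : HasPD g gx gy p) (hh : HasPD h hx hy p) :
    HasPD (fun q => g q * h q) (gx * h p + g p * hx) (gy * h p + g p * hy) p := by
  obtain ⟨L, hL, hL1, hL2⟩ := hg
  obtain ⟨M, hM, hM1, hM2⟩ := hh
  refine ⟨g p • M + h p • L, hL.mul hM, ?_, ?_⟩ <;>
    simp [hL1, hM1, hL2, hM2] <;> ring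

theorem inv (hg : HasPD g gx gy p) (h0 : g p ≠ 0) :
    HasPD (fun q => (g q)⁻¹) (-(gx / g p ^ 2)) (-(gy / g p ^ 2)) p := by
  obtain ⟨L, hL, hL1, hL2⟩ := hg
  refine ⟨(-(g p ^ 2)⁻¹) • L, (hasDerivAt_inv h0).comp_hasFDerivAt p hL, ?_, ?_⟩ <;>
    simp [hL1, hL2] <;> field_simp

theorem div (hg : HasPD g gx gy p) (hh : HasPD h hx hy p) (h0 : h p ≠ 0) :
    HasPD (fun q => g q / h q) ((gx * h p - g p * hx) / h p ^ 2)
      ((gy * h p - g p * hy) / h p ^ 2) p := by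
  have := hg.mul (hh.inv h0)
  refine (this.congr_fun fun q => ?_).congr_deriv (by field_simp; ring) (by field_simp; ring)
  rw [div_eq_mul_inv]

theorem sq (hg : HasPD g gx gy p) :
    HasPD (fun q => g q ^ 2) (2 * g p * gx) (2 * g p * gy) p := by
  refine ((hg.mul hg).congr_fun fun q => ?_).congr_deriv (by ring) (by ring)
  ring

theorem sqrt (hg : HasPD g gx gy p) (h0 : g p ≠ 0) :
    HasPD (fun q => Real.sqrt (g q)) (gx / (2 * Real.sqrt (g p)))
      (gy / (2 * Real.sqrt (g p))) p := by
  obtain ⟨L, hL, hL1, hL2⟩ := hg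
  refine ⟨(1 / (2 * Real.sqrt (g p))) • L,
    (Real.hasDerivAt_sqrt h0).comp_hasFDerivAt p hL, ?_, ?_⟩ <;>
    simp [hL1, hL2] <;> ring

end HasPD

theorem pdx_fst (q : ℝ × ℝ) : pdx (fun r : ℝ × ℝ => r.1) q = 1 := (HasPD.fst q).pdx_eq
theorem pdy_fst (q : ℝ × ℝ) : pdy (fun r : ℝ × ℝ => r.1) q = 0 := (HasPD.fst q).pdy_eq
theorem pdx_snd (q : ℝ × ℝ) : pdx (fun r : ℝ × ℝ => r.2) q = 0 := (HasPD.snd q).pdx_eq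
theorem pdy_snd (q : ℝ × ℝ) : pdy (fun r : ℝ × ℝ => r.2) q = 1 := (HasPD.snd q).pdy_eq

/-- second derivatives package -/
theorem hasPD_pd (g : ℝ × ℝ → ℝ) (p : ℝ × ℝ) (hg : ContDiffAt ℝ (⊤ : ℕ∞) g p) :
    HasPD (pdx g) (fderiv ℝ (fderiv ℝ g) p (1,0) (1,0)) (fderiv ℝ (fderiv ℝ g) p (0,1) (1,0)) p ∧
    HasPD (pdy g) (fderiv ℝ (fderiv ℝ g) p (1,0) (0,1)) (fderiv ℝ (fderiv ℝ g) p (0,1) (0,1)) p ∧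
    fderiv ℝ (fderiv ℝ g) p (1,0) (0,1) = fderiv ℝ (fderiv ℝ g) p (0,1) (1,0) := by
  have hfd : ContDiffAt ℝ (⊤ : ℕ∞) (fderiv ℝ g) p := hg.fderiv_right (by norm_cast)
  have hd2 : DifferentiableAt ℝ (fderiv ℝ g) p := hfd.differentiableAt (by simp)
  have hD2 : HasFDerivAt (fderiv ℝ g) (fderiv ℝ (fderiv ℝ g) p) p := hd2.hasFDerivAt
  refine ⟨⟨(ContinuousLinearMap.apply ℝ ℝ ((1:ℝ),(0:ℝ))).comp (fderiv ℝ (fderiv ℝ g) p),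
      (ContinuousLinearMap.apply ℝ ℝ ((1:ℝ),(0:ℝ))).hasFDerivAt.comp p hD2, by simp, by simp⟩,
    ⟨(ContinuousLinearMap.apply ℝ ℝ ((0:ℝ),(1:ℝ))).comp (fderiv ℝ (fderiv ℝ g) p),
      (ContinuousLinearMap.apply ℝ ℝ ((0:ℝ),(1:ℝ))).hasFDerivAt.comp p hD2, by simp, by simp⟩,
    ?_⟩
  have := hg.isSymmSndFDerivAt (by
    have h22 : ((2:ℕ∞) : WithTop ℕ∞) ≤ ((⊤:ℕ∞) : WithTop ℕ∞) := by exact_mod_cast le_top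
    simpa using h22)
  exact this (1,0) (0,1)


theorem HasPD.congr_nhds {g h : ℝ × ℝ → ℝ} {gx gy : ℝ} {p : ℝ × ℝ}
    (hg : HasPD g gx gy p) (he : h =ᶠ[nhds p] g) : HasPD h gx gy p := by
  obtain ⟨L, hL, h1, h2⟩ := hg
  exact ⟨L, hL.congr_of_eventuallyEq he, h1, h2⟩

/-- Master formula for the Laplace–Beltrami operator on the graph. -/
theorem lapS_clean (f φ : ℝ × ℝ → ℝ) (p : ℝ × ℝ) (a b c φxx φxy φyx φyy : ℝ)
    (hPP : HasPD (Pf f) a (b + 1/2) p) (hQQ : HasPD (Qf f) (b - 1/2) c p)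
    (hphx : HasPD (pdx φ) φxx φxy p) (hphy : HasPD (pdy φ) φyx φyy p) :
    lapS f φ p =
      ((((1 + Qf f p ^ 2) * pdx φ p - Pf f p * Qf f p * pdy φ p) *
            (Pf f p * a + Qf f p * (b - 1/2)) +
          (-(Pf f p * Qf f p) * pdx φ p + (1 + Pf f p ^ 2) * pdy φ p) *
            (Pf f p * (b + 1/2) + Qf f p * c))
        - Wf f p ^ 2 *
          ((2 * Qf f p * (b - 1/2)) * pdx φ p + (1 + Qf f p ^ 2) * φxx
            - ((a * Qf f p + Pf f p * (b - 1/2)) * pdy φ p + Pf f p * Qf f p * φyx)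
            - (((b + 1/2) * Qf f p + Pf f p * c) * pdx φ p + Pf f p * Qf f p * φxy)
            + (2 * Pf f p * (b + 1/2) * pdy φ p + (1 + Pf f p ^ 2) * φyy)))
        / (Wf f p ^ 2) ^ 2 := by
  have hw0 : (0:ℝ) < 1 + Pf f p ^ 2 + Qf f p ^ 2 := by positivity
  have hWpos : 0 < Wf f p := Real.sqrt_pos.mpr hw0
  have hEE : HasPD (Ef f) (0 + 2 * Pf f p * a) (0 + 2 * Pf f p * (b + 1/2)) p :=
    (HasPD.const 1 p).add hPP.sq
  have hGG : HasPD (Gf f) (0 + 2 * Qf f p * (b - 1/2)) (0 + 2 * Qf f p * c) p :=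
    (HasPD.const 1 p).add hQQ.sq
  have hFF : HasPD (Ff f) (a * Qf f p + Pf f p * (b - 1/2))
      ((b + 1/2) * Qf f p + Pf f p * c) p := hPP.mul hQQ
  have hww : HasPD (fun q => 1 + Pf f q ^ 2 + Qf f q ^ 2)
      (0 + 2 * Pf f p * a + 2 * Qf f p * (b - 1/2))
      (0 + 2 * Pf f p * (b + 1/2) + 2 * Qf f p * c) p :=
    ((HasPD.const 1 p).add hPP.sq).add hQQ.sq
  have hWW : HasPD (Wf f)
      ((0 + 2 * Pf f p * a + 2 * Qf f p * (b - 1/2)) / (2 * Wf f p))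
      ((0 + 2 * Pf f p * (b + 1/2) + 2 * Qf f p * c) / (2 * Wf f p)) p :=
    hww.sqrt hw0.ne'
  have hA := ((hGG.mul hphx).sub (hFF.mul hphy)).div hWW hWpos.ne'
  have hB := (((hFF.neg).mul hphx).add (hEE.mul hphy)).div hWW hWpos.ne'
  simp only [lapS]
  rw [hA.pdx_eq, hB.pdy_eq]
  simp only [Ef, Ff, Gf]
  field_simp
  ring


set_option maxHeartbeats 2000000 in
/-- **Second family, case `λ₂ = λ₃ = 0`, `λ₁ ≠ 0`**: under the ruled hypothesis `Q = −uP`,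
`u_y + u·u_x = 0`, if `Δx = λ₁x`, `Δy = λ₂y`, `Δf = λ₃f` on `D` with `λ₂ = λ₃ = 0`, `λ₁ ≠ 0`,
and `P` nowhere zero on `D`, then `uH₁ = −W`, i.e. `u(f_xx + f_yy) = −(1 + P²(1 + u²))`
(in particular `u` is nowhere zero), and moreover `−P(1 + u²)/(uW²) = λ₁x` and
`2/(uW²) = λ₁xy` on `D`. -/
theorem finite_type_S2_case_l2_l3_zero
    (D : Set (ℝ × ℝ)) (hD : IsOpen D) (hDne : D.Nonempty)
    (f : ℝ × ℝ → ℝ) (hf : ContDiffOn ℝ (⊤ : ℕ∞) f D)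
    (u : ℝ × ℝ → ℝ) (hu : ContDiffOn ℝ (⊤ : ℕ∞) u D)
    (hruled : ∀ p ∈ D, Qf f p = -(u p) * Pf f p)
    (hburgers : ∀ p ∈ D, pdy u p + u p * pdx u p = 0)
    (l1 l2 l3 : ℝ)
    (h1 : ∀ p ∈ D, lapS f (fun q => q.1) p = l1 * p.1)
    (h2 : ∀ p ∈ D, lapS f (fun q => q.2) p = l2 * p.2)
    (h3 : ∀ p ∈ D, lapS f f p = l3 * f p)
    (hl2 : l2 = 0) (hl3 : l3 = 0) (hl1 : l1 ≠ 0)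
    (hP : ∀ p ∈ D, Pf f p ≠ 0) :
    ∀ p ∈ D,
      (u p * H1f f p = -(Wf f p)) ∧
      (u p * (pdx (pdx f) p + pdy (pdy f) p) = -(1 + Pf f p ^ 2 * (1 + u p ^ 2))) ∧
      (u p ≠ 0) ∧
      (-(Pf f p * (1 + u p ^ 2)) / (u p * Wf f p ^ 2) = l1 * p.1) ∧
      (2 / (u p * Wf f p ^ 2) = l1 * (p.1 * p.2)) := by
  intro p hp
  have hnh := hD.mem_nhds hp
  have hfC : ContDiffAt ℝ (⊤ : ℕ∞) f p := hf.contDiffAt hnh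
  obtain ⟨hpdxf, hpdyf, hsym⟩ := hasPD_pd f p hfC
  set a := fderiv ℝ (fderiv ℝ f) p (1,0) (1,0) with ha
  set b := fderiv ℝ (fderiv ℝ f) p (0,1) (1,0) with hb
  set c := fderiv ℝ (fderiv ℝ f) p (0,1) (0,1) with hc
  rw [hsym] at hpdyf
  -- u derivatives
  have huC : ContDiffAt ℝ (⊤ : ℕ∞) u p := hu.contDiffAt hnh
  have hud : DifferentiableAt ℝ u p :=
    huC.differentiableAt (by simp)
  set ux := pdx u p with hux
  set uy := pdy u p with huy
  have huPD : HasPD u ux uy p := ⟨fderiv ℝ u p, hud.hasFDerivAt, rfl, rfl⟩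
  -- P and Q
  have hhalf : HasPD (fun q : ℝ × ℝ => q.2 / 2) ((0 * 2 - p.2 * 0) / 2 ^ 2)
      ((1 * 2 - p.2 * 0) / 2 ^ 2) p := (HasPD.snd p).div (HasPD.const 2 p) two_ne_zero
  have hhalf1 : HasPD (fun q : ℝ × ℝ => q.1 / 2) ((1 * 2 - p.1 * 0) / 2 ^ 2)
      ((0 * 2 - p.1 * 0) / 2 ^ 2) p := (HasPD.fst p).div (HasPD.const 2 p) two_ne_zero
  have hhalf' : HasPD (fun q : ℝ × ℝ => q.2 / 2) 0 (1/2) p :=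
    hhalf.congr_deriv (by norm_num) (by norm_num)
  have hhalf1' : HasPD (fun q : ℝ × ℝ => q.1 / 2) (1/2) 0 p :=
    hhalf1.congr_deriv (by norm_num) (by norm_num)
  have hPP : HasPD (Pf f) a (b + 1/2) p :=
    (hpdxf.add hhalf').congr_deriv (by ring) (by norm_num)
  have hQQ : HasPD (Qf f) (b - 1/2) c p :=
    (hpdyf.sub hhalf1').congr_deriv (by norm_num) (by ring)
  -- basic W facts
  have hw0 : (0:ℝ) < 1 + Pf f p ^ 2 + Qf f p ^ 2 := by positivity
  have hWpos : 0 < Wf f p := Real.sqrt_pos.mpr hw0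
  have hW2 : Wf f p ^ 2 = 1 + Pf f p ^ 2 + Qf f p ^ 2 := Real.sq_sqrt hw0.le
  -- consequences of the ruled hypothesis
  have FQ : Qf f p = -(u p) * Pf f p := hruled p hp
  have hQ2 : HasPD (Qf f) (-ux * Pf f p + -(u p) * a) (-uy * Pf f p + -(u p) * (b + 1/2)) p :=
    (huPD.neg.mul hPP).congr_nhds (Filter.eventuallyEq_of_mem hnh fun q hq => hruled q hq)
  obtain ⟨e1', e2'⟩ := hQQ.unique hQ2
  have Fuy : uy = -(u p * ux) := by linear_combination hburgers p hp
  have Fb' : b = 1/2 - (ux * Pf f p + u p * a) := by linear_combination e1'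
  have Fc' : c = 2 * u p * ux * Pf f p + u p ^ 2 * a - u p := by
    linear_combination e2' - Pf f p * Fuy - u p * Fb'
  -- derivatives of coordinate functions
  have hfstx : HasPD (pdx (fun q : ℝ × ℝ => q.1)) 0 0 p :=
    (HasPD.const 1 p).congr_fun pdx_fst
  have hfsty : HasPD (pdy (fun q : ℝ × ℝ => q.1)) 0 0 p :=
    (HasPD.const 0 p).congr_fun pdy_fst
  have hsndx : HasPD (pdx (fun q : ℝ × ℝ => q.2)) 0 0 p :=
    (HasPD.const 0 p).congr_fun pdx_snd
  have hsndy : HasPD (pdy (fun q : ℝ × ℝ => q.2)) 0 0 p :=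
    (HasPD.const 1 p).congr_fun pdy_snd
  -- first derivatives of f expressed via P, Q
  have hfx : pdx f p = Pf f p - p.2 / 2 := by simp only [Pf]; ring
  have hfy : pdy f p = Qf f p + p.1 / 2 := by simp only [Qf]; ring
  -- the three Laplacian equations
  have e1 := h1 p hp
  rw [lapS_clean f _ p a b c 0 0 0 0 hPP hQQ hfstx hfsty,
    div_eq_iff (by positivity : ((Wf f p ^ 2) ^ 2 : ℝ) ≠ 0)] at e1
  simp only [pdx_fst, pdy_fst] at e1
  rw [hW2, FQ, Fb', Fc'] at e1
  have e2 := h2 p hp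
  rw [lapS_clean f _ p a b c 0 0 0 0 hPP hQQ hsndx hsndy,
    div_eq_iff (by positivity : ((Wf f p ^ 2) ^ 2 : ℝ) ≠ 0), hl2, zero_mul] at e2
  simp only [pdx_snd, pdy_snd] at e2
  rw [hW2, FQ, Fb', Fc'] at e2
  have e3 := h3 p hp
  rw [lapS_clean f _ p a b c a b b c hPP hQQ hpdxf hpdyf,
    div_eq_iff (by positivity : ((Wf f p ^ 2) ^ 2 : ℝ) ≠ 0), hl3, zero_mul] at e3
  rw [hfx, hfy, hW2, FQ, Fb', Fc'] at e3
  -- core algebraic consequences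
  have hP0 : Pf f p ≠ 0 := hP p hp
  have hPK : Pf f p * (u p * (a + (2 * u p * ux * Pf f p + u p ^ 2 * a - u p))
      + (1 + Pf f p ^ 2 * (1 + u p ^ 2))) = 0 := by linear_combination -e2
  have K2 : u p * (a + (2 * u p * ux * Pf f p + u p ^ 2 * a - u p))
      = -(1 + Pf f p ^ 2 * (1 + u p ^ 2)) := by
    have := (mul_eq_zero.mp hPK).resolve_left hP0
    linear_combination this
  have hwpos : (0:ℝ) < 1 + Pf f p ^ 2 * (1 + u p ^ 2) := by positivity
  have K1 : Pf f p * (1 + u p ^ 2) * (a + (2 * u p * ux * Pf f p + u p ^ 2 * a - u p))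
      = l1 * p.1 * (1 + Pf f p ^ 2 * (1 + u p ^ 2)) ^ 2 := by
    linear_combination e1 - u p * e2
  have K3 : (a + (2 * u p * ux * Pf f p + u p ^ 2 * a - u p))
      * (1 + Pf f p * p.2 * (1 + u p ^ 2) / 2) = 0 := by
    linear_combination -e3 + (p.1 / 2 - u p * p.2 / 2) * e2
  have hu0 : u p ≠ 0 := by
    intro h0
    rw [h0] at K2
    have hpos : (0:ℝ) < 1 + Pf f p ^ 2 * (1 + (0:ℝ) ^ 2) := by positivity
    exact hpos.ne' (by linear_combination K2)
  have hac : a + (2 * u p * ux * Pf f p + u p ^ 2 * a - u p) ≠ 0 := by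
    intro h0
    rw [h0, mul_zero] at K2
    exact hwpos.ne' (by linear_combination K2)
  have K4 : 1 + Pf f p * p.2 * (1 + u p ^ 2) / 2 = 0 :=
    (mul_eq_zero.mp K3).resolve_left hac
  have K4' : Pf f p * p.2 * (1 + u p ^ 2) = -2 := by linear_combination 2 * K4
  have hG4w : (1 + Pf f p ^ 2 * (1 + u p ^ 2)) * (Pf f p * (1 + u p ^ 2)
      + l1 * p.1 * (u p * (1 + Pf f p ^ 2 * (1 + u p ^ 2)))) = 0 := by
    linear_combination Pf f p * (1 + u p ^ 2) * K2 - u p * K1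
  have hG4 : Pf f p * (1 + u p ^ 2)
      + l1 * p.1 * (u p * (1 + Pf f p ^ 2 * (1 + u p ^ 2))) = 0 :=
    (mul_eq_zero.mp hG4w).resolve_left hwpos.ne'
  have hG5 : (2:ℝ) = l1 * (p.1 * p.2) * (u p * (1 + Pf f p ^ 2 * (1 + u p ^ 2))) := by
    linear_combination -p.2 * hG4 + K4'
  -- conclude
  have hG2 : u p * (pdx (pdx f) p + pdy (pdy f) p)
      = -(1 + Pf f p ^ 2 * (1 + u p ^ 2)) := by
    rw [hpdxf.pdx_eq, hpdyf.pdy_eq, Fc']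
    linear_combination K2
  have hWsq : u p * (pdx (pdx f) p + pdy (pdy f) p) = -(Wf f p ^ 2) := by
    rw [hW2, FQ]
    linear_combination hG2
  refine ⟨?_, hG2, hu0, ?_, ?_⟩
  · simp only [H1f]
    rw [mul_div_assoc', div_eq_iff hWpos.ne']
    linear_combination hWsq
  · rw [hW2, FQ, div_eq_iff (mul_ne_zero hu0 (by positivity))]
    linear_combination -hG4
  · rw [hW2, FQ, div_eq_iff (mul_ne_zero hu0 (by positivity))]
    linear_combination hG5
end
end

section
/- (Second family, Case λ₃ ≠ 0, λ₁ = 0, equation (3.10)) Under the ruled hypothesis Q = −uP, u_y + u·u_x = 0, suppose Δx = λ₁·x, Δy = λ₂·y, Δf = λ₃·f on D for real constants with λ₃ ≠ 0, λ₁ = 0, and suppose P is nowhere zero on D. Then H₁ = uW, i.e. f_xx + f_yy = u·(1 + P²(1 + u²)), the constant λ₂ is nonzero, and f satisfies the partial differential equation f_xx + f_yy = ½(λ₂·xy − 2λ₃·f)·(1 + (f_x + y/2)²(1 + u²))² on D. -/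
noncomputable section

open Real
open scoped ContDiff

namespace FTaux

variable {g h : ℝ × ℝ → ℝ} {p v : ℝ × ℝ}

lemma fd_add (hg : DifferentiableAt ℝ g p) (hh : DifferentiableAt ℝ h p) :
    fderiv ℝ (fun q => g q + h q) p v = fderiv ℝ g p v + fderiv ℝ h p v := by
  rw [fderiv_fun_add hg hh]; simp

lemma fd_sub (hg : DifferentiableAt ℝ g p) (hh : DifferentiableAt ℝ h p) :
    fderiv ℝ (fun q => g q - h q) p v = fderiv ℝ g p v - fderiv ℝ h p v := by
  rw [fderiv_fun_sub hg hh]; simp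

lemma fd_neg : fderiv ℝ (fun q => -g q) p v = -fderiv ℝ g p v := by
  rw [fderiv_fun_neg]; simp

lemma fd_mul (hg : DifferentiableAt ℝ g p) (hh : DifferentiableAt ℝ h p) :
    fderiv ℝ (fun q => g q * h q) p v = g p * fderiv ℝ h p v + fderiv ℝ g p v * h p := by
  rw [fderiv_fun_mul hg hh]; simp [mul_comm]

lemma fd_const (c : ℝ) : fderiv ℝ (fun _ : ℝ × ℝ => c) p v = 0 := by
  rw [fderiv_fun_const]; simp

lemma fd_fst : fderiv ℝ (fun q : ℝ × ℝ => q.1) p v = v.1 := by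
  have : (fun q : ℝ × ℝ => q.1) = Prod.fst := rfl
  rw [this, fderiv_fst]; rfl

lemma fd_snd : fderiv ℝ (fun q : ℝ × ℝ => q.2) p v = v.2 := by
  have : (fun q : ℝ × ℝ => q.2) = Prod.snd := rfl
  rw [this, fderiv_snd]; rfl

lemma fd_sq (hg : DifferentiableAt ℝ g p) :
    fderiv ℝ (fun q => g q ^ 2) p v = 2 * g p * fderiv ℝ g p v := by
  have e : (fun q => g q ^ 2) = fun q => g q * g q := by funext q; ring
  rw [e, fd_mul hg hg]; ring

lemma fd_div (hg : DifferentiableAt ℝ g p) (hh : DifferentiableAt ℝ h p) (h0 : h p ≠ 0) :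
    fderiv ℝ (fun q => g q / h q) p v =
      (fderiv ℝ g p v * h p - g p * fderiv ℝ h p v) / h p ^ 2 := by
  have hinv : HasFDerivAt (fun q => (h q)⁻¹) ((-(h p ^ 2)⁻¹) • fderiv ℝ h p) p :=
    (hasDerivAt_inv h0).comp_hasFDerivAt p hh.hasFDerivAt
  have heq : (fun q => g q / h q) = fun q => g q * (h q)⁻¹ := by
    funext q; rw [div_eq_mul_inv]
  have hmul : HasFDerivAt (fun q => g q * (h q)⁻¹)
      (g p • ((-(h p ^ 2)⁻¹) • fderiv ℝ h p) + (h p)⁻¹ • fderiv ℝ g p) p :=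
    hg.hasFDerivAt.mul hinv
  rw [heq, hmul.fderiv]
  simp only [ContinuousLinearMap.add_apply, ContinuousLinearMap.smul_apply, smul_eq_mul]
  field_simp
  ring

lemma fd_div_const (hg : DifferentiableAt ℝ g p) (c : ℝ) :
    fderiv ℝ (fun q => g q / c) p v = fderiv ℝ g p v / c := by
  have heq : (fun q => g q / c) = fun q => g q * c⁻¹ := by
    funext q; rw [div_eq_mul_inv]
  rw [heq, fd_mul hg (differentiableAt_const _), fd_const, div_eq_mul_inv]
  ring

lemma fd_sqrt (hg : DifferentiableAt ℝ g p) (h0 : g p ≠ 0) :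
    fderiv ℝ (fun q => Real.sqrt (g q)) p v = fderiv ℝ g p v / (2 * Real.sqrt (g p)) := by
  rw [(hg.hasFDerivAt.sqrt h0).fderiv]
  simp only [ContinuousLinearMap.smul_apply, smul_eq_mul]
  field_simp

lemma one_le_inf : (1 : WithTop ℕ∞) ≤ ∞ :=
  (WithTop.coe_le_coe.mpr le_top).trans_eq' (by norm_cast)

lemma two_le_inf : (2 : WithTop ℕ∞) ≤ ∞ :=
  (WithTop.coe_le_coe.mpr le_top).trans_eq' (by norm_cast)

variable {f : ℝ × ℝ → ℝ}

lemma cd_pd (hf : ContDiffAt ℝ (⊤ : ℕ∞) f p) (v : ℝ × ℝ) :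
    ContDiffAt ℝ (⊤ : ℕ∞) (fun q => fderiv ℝ f q v) p := by
  have h1 : ContDiffAt ℝ (⊤ : ℕ∞) (fderiv ℝ f) p :=
    hf.fderiv_right (m := (⊤ : ℕ∞)) (le_of_eq (show ∞ + 1 = ∞ from rfl))
  exact h1.clm_apply contDiffAt_const

lemma fd_eval (hf : ContDiffAt ℝ (⊤ : ℕ∞) f p) (v w : ℝ × ℝ) :
    fderiv ℝ (fun q => fderiv ℝ f q w) p v = fderiv ℝ (fderiv ℝ f) p v w := by
  have hd : DifferentiableAt ℝ (fderiv ℝ f) p :=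
    (hf.fderiv_right (m := (⊤ : ℕ∞)) (le_of_eq (show ∞ + 1 = ∞ from rfl))).differentiableAt
      (by simp)
  have h := ((ContinuousLinearMap.apply ℝ ℝ w).hasFDerivAt.comp p hd.hasFDerivAt).fderiv
  have h2 : (fun q => fderiv ℝ f q w) = (ContinuousLinearMap.apply ℝ ℝ w) ∘ (fderiv ℝ f) := rfl
  rw [h2, h]; simp

lemma fderiv_swap (hf : ContDiffAt ℝ (⊤ : ℕ∞) f p) (v w : ℝ × ℝ) :
    fderiv ℝ (fun q => fderiv ℝ f q w) p v = fderiv ℝ (fun q => fderiv ℝ f q v) p w := by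
  rw [fd_eval hf v w, fd_eval hf w v]
  exact hf.isSymmSndFDerivAt (by rw [minSmoothness_of_isRCLikeNormedField]; exact two_le_inf) v w

lemma pdx_apply (g : ℝ × ℝ → ℝ) (p : ℝ × ℝ) : pdx g p = fderiv ℝ g p (1, 0) := rfl
lemma pdy_apply (g : ℝ × ℝ → ℝ) (p : ℝ × ℝ) : pdy g p = fderiv ℝ g p (0, 1) := rfl

lemma collect {w a b c d e g V : ℝ} (hw : w ≠ 0) (hV : w ^ 2 = V) :
    -(1 / w) * ((a * w - b * (c / (2 * w))) / w ^ 2 + (d * w - e * (g / (2 * w))) / w ^ 2) * V ^ 2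
      = -(V * (a + d) - (b * c + e * g) / 2) := by
  subst hV; field_simp; ring

end FTaux

open FTaux

private lemma lap_forms
    (D : Set (ℝ × ℝ)) (hD : IsOpen D)
    (f u : ℝ × ℝ → ℝ)
    (hf : ContDiffOn ℝ (⊤ : ℕ∞) f D) (hu : ContDiffOn ℝ (⊤ : ℕ∞) u D)
    (hruled : ∀ p ∈ D, Qf f p = -(u p) * Pf f p)
    (hburgers : ∀ p ∈ D, pdy u p + u p * pdx u p = 0)
    (p : ℝ × ℝ) (hp : p ∈ D) :
    lapS f (fun q => q.1) p * (1 + Pf f p ^ 2 + Qf f p ^ 2) ^ 2 =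
        -(Pf f p * (u p * (1 + Pf f p ^ 2 + Qf f p ^ 2)
            - (pdx (pdx f) p + pdy (pdy f) p))) ∧
    lapS f (fun q => q.2) p * (1 + Pf f p ^ 2 + Qf f p ^ 2) ^ 2 =
        -(Pf f p * ((1 + Pf f p ^ 2 + Qf f p ^ 2)
            + u p * (pdx (pdx f) p + pdy (pdy f) p))) ∧
    lapS f f p * (1 + Pf f p ^ 2 + Qf f p ^ 2) ^ 2 =
        -((pdx (pdx f) p + pdy (pdy f) p)
          - Pf f p / 2 *
            (p.2 * (u p * (1 + Pf f p ^ 2 + Qf f p ^ 2) - (pdx (pdx f) p + pdy (pdy f) p))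
             - p.1 * ((1 + Pf f p ^ 2 + Qf f p ^ 2)
                + u p * (pdx (pdx f) p + pdy (pdy f) p)))) := by
  -- basic smoothness facts at p
  have hfa : ContDiffAt ℝ (⊤ : ℕ∞) f p := (hf p hp).contDiffAt (hD.mem_nhds hp)
  have hua : ContDiffAt ℝ (⊤ : ℕ∞) u p := (hu p hp).contDiffAt (hD.mem_nhds hp)
  have dA : DifferentiableAt ℝ (pdx f) p := ((cd_pd hfa (1, 0)).differentiableAt (by simp))
  have dB : DifferentiableAt ℝ (pdy f) p := ((cd_pd hfa (0, 1)).differentiableAt (by simp))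
  have du : DifferentiableAt ℝ u p := hua.differentiableAt (by simp)
  have dsnd : DifferentiableAt ℝ (fun q : ℝ × ℝ => q.2) p := differentiable_snd.differentiableAt
  have dfst : DifferentiableAt ℝ (fun q : ℝ × ℝ => q.1) p := differentiable_fst.differentiableAt
  have dhalf2 : DifferentiableAt ℝ (fun q : ℝ × ℝ => q.2 / 2) p := by fun_prop
  have dhalf1 : DifferentiableAt ℝ (fun q : ℝ × ℝ => q.1 / 2) p := by fun_prop
  have dP : DifferentiableAt ℝ (Pf f) p := by
    unfold Pf; exact dA.add dhalf2
  have dQ : DifferentiableAt ℝ (Qf f) p := by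
    unfold Qf; exact dB.sub dhalf1
  have dE : DifferentiableAt ℝ (Ef f) p := by
    unfold Ef; exact (differentiableAt_const 1).add (dP.pow 2)
  have dF : DifferentiableAt ℝ (Ff f) p := by
    unfold Ff; exact dP.mul dQ
  have dG : DifferentiableAt ℝ (Gf f) p := by
    unfold Gf; exact (differentiableAt_const 1).add (dQ.pow 2)
  have dS : DifferentiableAt ℝ (fun q => 1 + Pf f q ^ 2 + Qf f q ^ 2) p :=
    (((differentiableAt_const 1).add (dP.pow 2)).add (dQ.pow 2))
  have Spos : (0:ℝ) < 1 + Pf f p ^ 2 + Qf f p ^ 2 := by positivity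
  have dW : DifferentiableAt ℝ (Wf f) p := by
    unfold Wf; exact dS.sqrt Spos.ne'
  have Wpos : 0 < Wf f p := by
    unfold Wf; exact Real.sqrt_pos.mpr Spos
  have Wne : Wf f p ≠ 0 := Wpos.ne'
  have hV : Wf f p ^ 2 = 1 + Pf f p ^ 2 + Qf f p ^ 2 := by
    unfold Wf; exact Real.sq_sqrt Spos.le
  -- first derivative formulas
  have hPv : ∀ v : ℝ × ℝ, fderiv ℝ (Pf f) p v = fderiv ℝ (pdx f) p v + v.2 / 2 := by
    intro v; unfold Pf
    rw [fd_add dA dhalf2, fd_div_const dsnd 2, fd_snd]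
  have hQv : ∀ v : ℝ × ℝ, fderiv ℝ (Qf f) p v = fderiv ℝ (pdy f) p v - v.1 / 2 := by
    intro v; unfold Qf
    rw [fd_sub dB dhalf1, fd_div_const dfst 2, fd_fst]
  have hEv : ∀ v : ℝ × ℝ, fderiv ℝ (Ef f) p v = 2 * Pf f p * fderiv ℝ (Pf f) p v := by
    intro v; unfold Ef
    rw [fd_add (differentiableAt_const 1) (dP.fun_pow 2), fd_const, fd_sq dP]; ring
  have hGv : ∀ v : ℝ × ℝ, fderiv ℝ (Gf f) p v = 2 * Qf f p * fderiv ℝ (Qf f) p v := by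
    intro v; unfold Gf
    rw [fd_add (differentiableAt_const 1) (dQ.fun_pow 2), fd_const, fd_sq dQ]; ring
  have hFv : ∀ v : ℝ × ℝ, fderiv ℝ (Ff f) p v =
      Pf f p * fderiv ℝ (Qf f) p v + fderiv ℝ (Pf f) p v * Qf f p := by
    intro v; unfold Ff; rw [fd_mul dP dQ]
  have hWv : ∀ v : ℝ × ℝ, fderiv ℝ (Wf f) p v =
      (2 * Pf f p * fderiv ℝ (Pf f) p v + 2 * Qf f p * fderiv ℝ (Qf f) p v) /
        (2 * Wf f p) := by
    intro v; unfold Wf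
    rw [fd_sqrt dS Spos.ne']
    have : fderiv ℝ (fun q => 1 + Pf f q ^ 2 + Qf f q ^ 2) p v =
        2 * Pf f p * fderiv ℝ (Pf f) p v + 2 * Qf f p * fderiv ℝ (Qf f) p v := by
      rw [fd_add ((differentiableAt_const 1).fun_add (dP.fun_pow 2)) (dQ.fun_pow 2),
        fd_add (differentiableAt_const 1) (dP.fun_pow 2), fd_const, fd_sq dP, fd_sq dQ]
      ring
    rw [this]
  -- symmetry of second derivatives
  have hs2 : fderiv ℝ (pdy f) p (1, 0) = fderiv ℝ (pdx f) p (0, 1) := by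
    unfold pdx pdy
    exact fderiv_swap hfa (1, 0) (0, 1)
  -- ruled constraint differentiated
  have hQp : Qf f p = -(u p) * Pf f p := hruled p hp
  have hfdQ : fderiv ℝ (Qf f) p = fderiv ℝ (fun q => -(u q) * Pf f q) p :=
    (Filter.eventuallyEq_of_mem (hD.mem_nhds hp) hruled).fderiv_eq
  have hCv : ∀ v : ℝ × ℝ, fderiv ℝ (Qf f) p v =
      -(u p) * fderiv ℝ (Pf f) p v + (-(fderiv ℝ u p v)) * Pf f p := by
    intro v
    rw [hfdQ, fd_mul du.fun_neg dP, fd_neg]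
  have ebu : fderiv ℝ u p (0, 1) + u p * fderiv ℝ u p (1, 0) = 0 := hburgers p hp
  -- constraint equations on the second jet
  have eS2 : fderiv ℝ (pdy f) p (1, 0) =
      1 / 2 - fderiv ℝ u p (1, 0) * Pf f p - u p * fderiv ℝ (pdx f) p (1, 0) := by
    have h1 := hCv (1, 0)
    rw [hQv (1, 0), hPv (1, 0)] at h1
    norm_num at h1
    linear_combination h1
  have eS : fderiv ℝ (pdx f) p (0, 1) =
      1 / 2 - fderiv ℝ u p (1, 0) * Pf f p - u p * fderiv ℝ (pdx f) p (1, 0) := by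
    rw [← hs2]; exact eS2
  have eT : fderiv ℝ (pdy f) p (0, 1) =
      -(u p) * (fderiv ℝ (pdx f) p (0, 1) + 1 / 2)
        + (u p * fderiv ℝ u p (1, 0)) * Pf f p := by
    have h1 := hCv (0, 1)
    rw [hQv (0, 1), hPv (0, 1)] at h1
    norm_num at h1
    linear_combination h1 - Pf f p * ebu
  -- conversions between pdx-atoms and fderiv-atoms in the goal
  have c1 : pdx (pdx f) p = fderiv ℝ (pdx f) p (1, 0) := rfl
  have c2 : pdy (pdy f) p = fderiv ℝ (pdy f) p (0, 1) := rfl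
  refine ⟨?_, ?_, ?_⟩
  · -- φ = x
    have i1 : (fun q => (Gf f q * pdx (fun q : ℝ × ℝ => q.1) q
          - Ff f q * pdy (fun q : ℝ × ℝ => q.1) q) / Wf f q)
        = fun q => Gf f q / Wf f q := by
      funext q; simp only [pdx, pdy, fd_fst]; norm_num
    have i2 : (fun q => (-(Ff f q) * pdx (fun q : ℝ × ℝ => q.1) q
          + Ef f q * pdy (fun q : ℝ × ℝ => q.1) q) / Wf f q)
        = fun q => -Ff f q / Wf f q := by
      funext q; simp only [pdx, pdy, fd_fst]; norm_num
    have d1 := fd_div (v := (1, 0)) dG dW Wne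
    rw [hGv, hWv, hPv, hQv] at d1
    have d2 := fd_div (v := (0, 1)) dF.fun_neg dW Wne
    rw [fd_neg, hFv, hWv, hPv, hQv] at d2
    simp only [lapS]
    rw [i1, i2, pdx_apply, pdy_apply, d1, d2, collect Wne hV, c1, c2]
    simp only [Ef, Ff, Gf]
    rw [eT, eS2, eS, hQp]
    norm_num
    ring
  · -- φ = y
    have i1 : (fun q => (Gf f q * pdx (fun q : ℝ × ℝ => q.2) q
          - Ff f q * pdy (fun q : ℝ × ℝ => q.2) q) / Wf f q)
        = fun q => -Ff f q / Wf f q := by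
      funext q; simp only [pdx, pdy, fd_snd]; norm_num
    have i2 : (fun q => (-(Ff f q) * pdx (fun q : ℝ × ℝ => q.2) q
          + Ef f q * pdy (fun q : ℝ × ℝ => q.2) q) / Wf f q)
        = fun q => Ef f q / Wf f q := by
      funext q; simp only [pdx, pdy, fd_snd]; norm_num
    have d1 := fd_div (v := (1, 0)) dF.fun_neg dW Wne
    rw [fd_neg, hFv, hWv, hPv, hQv] at d1
    have d2 := fd_div (v := (0, 1)) dE dW Wne
    rw [hEv, hWv, hPv, hQv] at d2
    simp only [lapS]
    rw [i1, i2, pdx_apply, pdy_apply, d1, d2, collect Wne hV, c1, c2]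
    simp only [Ef, Ff, Gf]
    rw [eT, eS2, eS, hQp]
    norm_num
    ring
  · -- φ = f
    have hap : pdx f p = Pf f p - p.2 / 2 := by simp only [Pf]; ring
    have hbp : pdy f p = Qf f p + p.1 / 2 := by simp only [Qf]; ring
    have hN1v : ∀ v : ℝ × ℝ, fderiv ℝ (fun q => Gf f q * pdx f q - Ff f q * pdy f q) p v
        = (Gf f p * fderiv ℝ (pdx f) p v + fderiv ℝ (Gf f) p v * pdx f p)
          - (Ff f p * fderiv ℝ (pdy f) p v + fderiv ℝ (Ff f) p v * pdy f p) := by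
      intro v
      rw [fd_sub (dG.fun_mul dA) (dF.fun_mul dB), fd_mul dG dA, fd_mul dF dB]
    have hN2v : ∀ v : ℝ × ℝ, fderiv ℝ (fun q => -(Ff f q) * pdx f q + Ef f q * pdy f q) p v
        = ((-(Ff f p)) * fderiv ℝ (pdx f) p v + (-(fderiv ℝ (Ff f) p v)) * pdx f p)
          + (Ef f p * fderiv ℝ (pdy f) p v + fderiv ℝ (Ef f) p v * pdy f p) := by
      intro v
      rw [fd_add (dF.fun_neg.fun_mul dA) (dE.fun_mul dB), fd_mul dF.fun_neg dA, fd_mul dE dB, fd_neg]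
    have d1 := fd_div (v := (1, 0)) ((dG.fun_mul dA).fun_sub (dF.fun_mul dB)) dW Wne
    rw [hN1v, hGv, hFv, hWv, hPv, hQv] at d1
    have d2 := fd_div (v := (0, 1)) ((dF.fun_neg.fun_mul dA).fun_add (dE.fun_mul dB)) dW Wne
    rw [hN2v, hEv, hFv, hWv, hPv, hQv] at d2
    simp only [lapS]
    rw [pdx_apply, pdy_apply, d1, d2, collect Wne hV, c1, c2]
    simp only [Ef, Ff, Gf]
    rw [eT, eS2, eS, hap, hbp, hQp]
    norm_num
    ring

/-- **Second family, case `λ₃ ≠ 0`, `λ₁ = 0`** (equation (3.10)). -/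
theorem finite_type_S2_case_l3_ne_zero_l1_zero
    (D : Set (ℝ × ℝ)) (hD : IsOpen D) (hDne : D.Nonempty)
    (f : ℝ × ℝ → ℝ) (hf : ContDiffOn ℝ (⊤ : ℕ∞) f D)
    (u : ℝ × ℝ → ℝ) (hu : ContDiffOn ℝ (⊤ : ℕ∞) u D)
    (hruled : ∀ p ∈ D, Qf f p = -(u p) * Pf f p)
    (hburgers : ∀ p ∈ D, pdy u p + u p * pdx u p = 0)
    (l1 l2 l3 : ℝ)
    (h1 : ∀ p ∈ D, lapS f (fun q => q.1) p = l1 * p.1)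
    (h2 : ∀ p ∈ D, lapS f (fun q => q.2) p = l2 * p.2)
    (h3 : ∀ p ∈ D, lapS f f p = l3 * f p)
    (hl3 : l3 ≠ 0) (hl1 : l1 = 0)
    (hP : ∀ p ∈ D, Pf f p ≠ 0) :
    (∀ p ∈ D,
      H1f f p = u p * Wf f p ∧
      pdx (pdx f) p + pdy (pdy f) p = u p * (1 + Pf f p ^ 2 * (1 + u p ^ 2))) ∧
    l2 ≠ 0 ∧
    (∀ p ∈ D,
      pdx (pdx f) p + pdy (pdy f) p =
        (1 / 2) * (l2 * (p.1 * p.2) - 2 * l3 * f p) *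
          (1 + (pdx f p + p.2 / 2) ^ 2 * (1 + u p ^ 2)) ^ 2) := by
  -- the central consequence of Δx = 0 : f_xx + f_yy = u W²
  have key : ∀ p ∈ D, pdx (pdx f) p + pdy (pdy f) p
      = u p * (1 + Pf f p ^ 2 + Qf f p ^ 2) := by
    intro p hp
    have Lx := (lap_forms D hD f u hf hu hruled hburgers p hp).1
    rw [h1 p hp, hl1] at Lx
    have h0 : Pf f p * (u p * (1 + Pf f p ^ 2 + Qf f p ^ 2)
        - (pdx (pdx f) p + pdy (pdy f) p)) = 0 := by linear_combination Lx
    rcases mul_eq_zero.mp h0 with h | h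
    · exact absurd h (hP p hp)
    · linarith
  have Vpos : ∀ p : ℝ × ℝ, (0:ℝ) < 1 + Pf f p ^ 2 + Qf f p ^ 2 := fun p => by positivity
  refine ⟨?_, ?_, ?_⟩
  · intro p hp
    have hT := key p hp
    have hQp : Qf f p = -(u p) * Pf f p := hruled p hp
    constructor
    · have Wpos : 0 < Wf f p := by
        unfold Wf; exact Real.sqrt_pos.mpr (by positivity)
      have hV : Wf f p ^ 2 = 1 + Pf f p ^ 2 + Qf f p ^ 2 := by
        unfold Wf; exact Real.sq_sqrt (by positivity)
      simp only [H1f]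
      rw [hT, ← hV]
      field_simp [Wpos.ne']
    · linear_combination hT + u p * (Qf f p - u p * Pf f p) * hQp
  · -- l2 ≠ 0
    intro h0
    obtain ⟨p, hp⟩ := hDne
    have Ly := (lap_forms D hD f u hf hu hruled hburgers p hp).2.1
    rw [h2 p hp, h0] at Ly
    have hT := key p hp
    have hQp : Qf f p = -(u p) * Pf f p := hruled p hp
    have hfac : Pf f p * ((1 + Pf f p ^ 2 + Qf f p ^ 2) * (1 + u p ^ 2)) = 0 := by
      linear_combination Ly - Pf f p * u p * hT
    rcases mul_eq_zero.mp hfac with h | h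
    · exact hP p hp h
    · have : (0:ℝ) < (1 + Pf f p ^ 2 + Qf f p ^ 2) * (1 + u p ^ 2) := by positivity
      linarith
  · intro p hp
    have forms := lap_forms D hD f u hf hu hruled hburgers p hp
    have Ly := forms.2.1
    have Lf3 := forms.2.2
    rw [h2 p hp] at Ly
    rw [h3 p hp] at Lf3
    have hT := key p hp
    have hQp : Qf f p = -(u p) * Pf f p := hruled p hp
    rw [show pdx f p + p.2 / 2 = Pf f p from rfl]
    linear_combination Lf3 - (p.1 / 2) * Ly - (Pf f p * p.2 / 2) * hT
      + (-(1 / 2) * (l2 * (p.1 * p.2) - 2 * l3 * f p) * (u p * Pf f p - Qf f p)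
          * ((1 + Pf f p ^ 2 * (1 + u p ^ 2)) + (1 + Pf f p ^ 2 + Qf f p ^ 2))) * hQp
end
end

section
/- (Second family, Case λ₃ ≠ 0, λ₂ = 0, equation (3.11)) Under the ruled hypothesis Q = −uP, u_y + u·u_x = 0, suppose Δx = λ₁·x, Δy = λ₂·y, Δf = λ₃·f on D for real constants with λ₃ ≠ 0, λ₂ = 0, and suppose P is nowhere zero on D. Then u·H₁ = −W, i.e. u·(f_xx + f_yy) = −(1 + P²(1 + u²)), the constant λ₁ is nonzero, and f satisfies the partial differential equation f_xx + f_yy = −½(λ₁·xy + 2λ₃·f)·(1 + (f_x + y/2)²(1 + u²))² on D. -/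
noncomputable section

section helpers
variable {a b : ℝ × ℝ → ℝ} {p v : ℝ × ℝ}

lemma fdv_add (ha : DifferentiableAt ℝ a p) (hb : DifferentiableAt ℝ b p) :
    fderiv ℝ (fun q => a q + b q) p v = fderiv ℝ a p v + fderiv ℝ b p v := by
  rw [fderiv_fun_add ha hb]; rfl

lemma fdv_sub (ha : DifferentiableAt ℝ a p) (hb : DifferentiableAt ℝ b p) :
    fderiv ℝ (fun q => a q - b q) p v = fderiv ℝ a p v - fderiv ℝ b p v := by
  rw [fderiv_fun_sub ha hb]; rfl

lemma fdv_mul (ha : DifferentiableAt ℝ a p) (hb : DifferentiableAt ℝ b p) :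
    fderiv ℝ (fun q => a q * b q) p v = a p * fderiv ℝ b p v + b p * fderiv ℝ a p v := by
  rw [fderiv_fun_mul ha hb]; simp

lemma fdv_const (c : ℝ) : fderiv ℝ (fun _ : ℝ × ℝ => c) p v = 0 := by
  rw [fderiv_fun_const]; simp

lemma fdv_fst : fderiv ℝ (fun q : ℝ × ℝ => q.1) p v = v.1 := by
  have := (hasFDerivAt_fst (𝕜 := ℝ) (p := p) (E := ℝ) (F := ℝ)).fderiv
  simp only [this]; rfl

lemma fdv_snd : fderiv ℝ (fun q : ℝ × ℝ => q.2) p v = v.2 := by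
  have := (hasFDerivAt_snd (𝕜 := ℝ) (p := p) (E := ℝ) (F := ℝ)).fderiv
  simp only [this]; rfl

lemma fdv_div_const (ha : DifferentiableAt ℝ a p) (c : ℝ) :
    fderiv ℝ (fun q => a q / c) p v = fderiv ℝ a p v / c := by
  simp only [div_eq_mul_inv]
  rw [fderiv_mul_const ha]; simp [div_eq_mul_inv]; ring

lemma fdv_inv (hb : DifferentiableAt ℝ b p) (hbne : b p ≠ 0) :
    fderiv ℝ (fun q => (b q)⁻¹) p v = -(fderiv ℝ b p v) / (b p) ^ 2 := by
  have h := (hasDerivAt_inv hbne).comp_hasFDerivAt p hb.hasFDerivAt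
  have h2 : HasFDerivAt (fun q => (b q)⁻¹) (-(b p ^ 2)⁻¹ • fderiv ℝ b p) p := h
  rw [h2.fderiv]; simp; ring

lemma fdv_div (ha : DifferentiableAt ℝ a p) (hb : DifferentiableAt ℝ b p) (hbne : b p ≠ 0) :
    fderiv ℝ (fun q => a q / b q) p v
      = (fderiv ℝ a p v * b p - a p * fderiv ℝ b p v) / (b p) ^ 2 := by
  simp only [div_eq_mul_inv]
  rw [fdv_mul (b := fun q => (b q)⁻¹) ha (hb.inv hbne), fdv_inv hb hbne]
  field_simp
  ring

lemma fdv_sqrt (hb : DifferentiableAt ℝ b p) (hbne : b p ≠ 0) :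
    fderiv ℝ (fun q => Real.sqrt (b q)) p v = fderiv ℝ b p v / (2 * Real.sqrt (b p)) := by
  rw [fderiv_sqrt hb hbne]; simp; ring

lemma fdv_sq (ha : DifferentiableAt ℝ a p) :
    fderiv ℝ (fun q => a q ^ 2) p v = 2 * a p * fderiv ℝ a p v := by
  have : (fun q => a q ^ 2) = fun q => a q * a q := by funext q; ring
  rw [this, fdv_mul ha ha]; ring

end helpers

lemma le_inftop {k : ℕ∞} : (k : WithTop ℕ∞) ≤ ((⊤:ℕ∞) : WithTop ℕ∞) := by exact_mod_cast le_top

variable {f : ℝ × ℝ → ℝ} {p : ℝ × ℝ}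

lemma contDiffAt_pdx (hf : ContDiffAt ℝ (⊤ : ℕ∞) f p) : ContDiffAt ℝ (⊤ : ℕ∞) (pdx f) p := by
  have h1 : ContDiffAt ℝ (⊤ : ℕ∞) (fderiv ℝ f) p :=
    hf.fderiv_right (m := (⊤:ℕ∞)) (by exact_mod_cast (le_top : (⊤:ℕ∞)+1 ≤ ⊤))
  exact h1.clm_apply contDiffAt_const

lemma contDiffAt_pdy (hf : ContDiffAt ℝ (⊤ : ℕ∞) f p) : ContDiffAt ℝ (⊤ : ℕ∞) (pdy f) p := by
  have h1 : ContDiffAt ℝ (⊤ : ℕ∞) (fderiv ℝ f) p :=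
    hf.fderiv_right (m := (⊤:ℕ∞)) (by exact_mod_cast (le_top : (⊤:ℕ∞)+1 ≤ ⊤))
  exact h1.clm_apply contDiffAt_const

lemma pdx_pdy_symm (hf : ContDiffAt ℝ (⊤ : ℕ∞) f p) : pdy (pdx f) p = pdx (pdy f) p := by
  have hd : DifferentiableAt ℝ (fderiv ℝ f) p :=
    (hf.fderiv_right (m := (⊤:ℕ∞)) (by exact_mod_cast (le_top : (⊤:ℕ∞)+1 ≤ ⊤))).differentiableAt
      (by simp)
  have hsymm := hf.isSymmSndFDerivAt (by rw [minSmoothness_of_isRCLikeNormedField]; exact le_inftop (k := 2))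
  have e1 : pdy (pdx f) p = fderiv ℝ (fderiv ℝ f) p (0,1) (1,0) := by
    show fderiv ℝ (fun q => fderiv ℝ f q (1,0)) p (0,1) = _
    rw [fderiv_clm_apply hd (differentiableAt_const _)]
    simp
  have e2 : pdx (pdy f) p = fderiv ℝ (fderiv ℝ f) p (1,0) (0,1) := by
    show fderiv ℝ (fun q => fderiv ℝ f q (0,1)) p (1,0) = _
    rw [fderiv_clm_apply hd (differentiableAt_const _)]
    simp
  rw [e1, e2, hsymm]

set_option maxHeartbeats 2000000 in
lemma raw_eqs (f : ℝ × ℝ → ℝ) {p : ℝ × ℝ} (hf : ContDiffAt ℝ (⊤ : ℕ∞) f p) :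
    (lapS f (fun q => q.1) p * Wf f p ^ 4 =
      -((2*Qf f p*(pdx (pdy f) p - 1/2)) * Wf f p^2
        - (1+Qf f p^2)*(Pf f p*pdx (pdx f) p + Qf f p*(pdx (pdy f) p - 1/2))
        + (-((pdx (pdy f) p + 1/2)*Qf f p + Pf f p*pdy (pdy f) p)) * Wf f p^2
        + (Pf f p*Qf f p)*(Pf f p*(pdx (pdy f) p + 1/2) + Qf f p*pdy (pdy f) p))) ∧
    (lapS f (fun q => q.2) p * Wf f p ^ 4 =
      -((-(pdx (pdx f) p*Qf f p + Pf f p*(pdx (pdy f) p - 1/2))) * Wf f p^2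
        + (Pf f p*Qf f p)*(Pf f p*pdx (pdx f) p + Qf f p*(pdx (pdy f) p - 1/2))
        + (2*Pf f p*(pdx (pdy f) p + 1/2)) * Wf f p^2
        - (1+Pf f p^2)*(Pf f p*(pdx (pdy f) p + 1/2) + Qf f p*pdy (pdy f) p))) ∧
    (lapS f f p * Wf f p ^ 4 =
      -(((2*Qf f p*(pdx (pdy f) p - 1/2))*(Pf f p - p.2/2) + (1+Qf f p^2)*pdx (pdx f) p
           - (pdx (pdx f) p*Qf f p + Pf f p*(pdx (pdy f) p - 1/2))*(Qf f p + p.1/2)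
           - (Pf f p*Qf f p)*pdx (pdy f) p) * Wf f p^2
        - ((1+Qf f p^2)*(Pf f p - p.2/2) - (Pf f p*Qf f p)*(Qf f p + p.1/2))
            * (Pf f p*pdx (pdx f) p + Qf f p*(pdx (pdy f) p - 1/2))
        + ((-((pdx (pdy f) p + 1/2)*Qf f p + Pf f p*pdy (pdy f) p))*(Pf f p - p.2/2)
           - (Pf f p*Qf f p)*pdx (pdy f) p + (2*Pf f p*(pdx (pdy f) p + 1/2))*(Qf f p + p.1/2)
           + (1+Pf f p^2)*pdy (pdy f) p) * Wf f p^2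
        - ((-(Pf f p*Qf f p))*(Pf f p - p.2/2) + (1+Pf f p^2)*(Qf f p + p.1/2))
            * (Pf f p*(pdx (pdy f) p + 1/2) + Qf f p*pdy (pdy f) p))) := by
  have lei1 : (1:WithTop ℕ∞) ≤ ((⊤:ℕ∞):WithTop ℕ∞) := by exact_mod_cast le_inftop
  have dfx : DifferentiableAt ℝ (pdx f) p := (contDiffAt_pdx hf).differentiableAt (by simp)
  have dfy : DifferentiableAt ℝ (pdy f) p := (contDiffAt_pdy hf).differentiableAt (by simp)
  have dfst : DifferentiableAt ℝ (fun q : ℝ × ℝ => q.1) p := differentiableAt_fst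
  have dsnd : DifferentiableAt ℝ (fun q : ℝ × ℝ => q.2) p := differentiableAt_snd
  have dsnd2 : DifferentiableAt ℝ (fun q : ℝ × ℝ => q.2 / 2) p := by fun_prop
  have dfst2 : DifferentiableAt ℝ (fun q : ℝ × ℝ => q.1 / 2) p := by fun_prop
  have dP : DifferentiableAt ℝ (Pf f) p := dfx.add dsnd2
  have dQ : DifferentiableAt ℝ (Qf f) p := dfy.sub dfst2
  have dE : DifferentiableAt ℝ (Ef f) p := (differentiableAt_const (1:ℝ)).add (dP.pow 2)
  have dF : DifferentiableAt ℝ (Ff f) p := dP.mul dQ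
  have dG : DifferentiableAt ℝ (Gf f) p := (differentiableAt_const (1:ℝ)).add (dQ.pow 2)
  have hgpos : (0:ℝ) < 1 + Pf f p^2 + Qf f p^2 := by positivity
  have dg : DifferentiableAt ℝ (fun q => 1 + Pf f q^2 + Qf f q^2) p :=
    ((differentiableAt_const (1:ℝ)).add (dP.pow 2)).add (dQ.pow 2)
  have dW : DifferentiableAt ℝ (Wf f) p := dg.sqrt (ne_of_gt hgpos)
  have hWpos : 0 < Wf f p := Real.sqrt_pos.mpr hgpos
  have hWne : Wf f p ≠ 0 := ne_of_gt hWpos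
  have hsy : pdy (pdx f) p = pdx (pdy f) p := pdx_pdy_symm hf
  -- directional derivative values
  have hPv : ∀ v : ℝ × ℝ, fderiv ℝ (Pf f) p v = fderiv ℝ (pdx f) p v + v.2/2 := by
    intro v
    show fderiv ℝ (fun q => pdx f q + q.2/2) p v = _
    rw [fdv_add dfx dsnd2, fdv_div_const dsnd 2,
      fdv_snd]
  have hQv : ∀ v : ℝ × ℝ, fderiv ℝ (Qf f) p v = fderiv ℝ (pdy f) p v - v.1/2 := by
    intro v
    show fderiv ℝ (fun q => pdy f q - q.1/2) p v = _
    rw [fdv_sub dfy dfst2, fdv_div_const dfst 2,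
      fdv_fst]
  have hEv : ∀ v : ℝ × ℝ, fderiv ℝ (Ef f) p v = 2 * Pf f p * fderiv ℝ (Pf f) p v := by
    intro v
    show fderiv ℝ (fun q => 1 + Pf f q ^ 2) p v = _
    rw [fdv_add (b := fun q => Pf f q ^ 2) (differentiableAt_const (1:ℝ)) (dP.pow 2), fdv_sq dP, fdv_const]
    ring
  have hGv : ∀ v : ℝ × ℝ, fderiv ℝ (Gf f) p v = 2 * Qf f p * fderiv ℝ (Qf f) p v := by
    intro v
    show fderiv ℝ (fun q => 1 + Qf f q ^ 2) p v = _
    rw [fdv_add (b := fun q => Qf f q ^ 2) (differentiableAt_const (1:ℝ)) (dQ.pow 2), fdv_sq dQ, fdv_const]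
    ring
  have hFv : ∀ v : ℝ × ℝ, fderiv ℝ (Ff f) p v
      = Pf f p * fderiv ℝ (Qf f) p v + Qf f p * fderiv ℝ (Pf f) p v := by
    intro v
    show fderiv ℝ (fun q => Pf f q * Qf f q) p v = _
    rw [fdv_mul dP dQ]
  have hWv : ∀ v : ℝ × ℝ, fderiv ℝ (Wf f) p v
      = (Pf f p * fderiv ℝ (Pf f) p v + Qf f p * fderiv ℝ (Qf f) p v) / Wf f p := by
    intro v
    show fderiv ℝ (fun q => Real.sqrt (1 + Pf f q^2 + Qf f q^2)) p v = _
    rw [fdv_sqrt dg (ne_of_gt hgpos),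
      fdv_add (a := fun q => 1 + Pf f q ^ 2) (b := fun q => Qf f q ^ 2) (ha := (differentiableAt_const (1:ℝ)).add (dP.pow 2)) (hb := dQ.pow 2),
      fdv_add (b := fun q => Pf f q ^ 2) (differentiableAt_const (1:ℝ)) (dP.pow 2), fdv_sq dP, fdv_sq dQ, fdv_const]
    show _ = _ / Wf f p
    rw [show Real.sqrt (1 + Pf f p^2 + Qf f p^2) = Wf f p from rfl]
    field_simp
    ring
  -- specialized values
  have hPx : fderiv ℝ (Pf f) p (1,0) = pdx (pdx f) p := by rw [hPv]; norm_num; rfl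
  have hPy : fderiv ℝ (Pf f) p (0,1) = pdx (pdy f) p + 1/2 := by
    rw [hPv]; norm_num; rw [← hsy]; rfl
  have hQx : fderiv ℝ (Qf f) p (1,0) = pdx (pdy f) p - 1/2 := by rw [hQv]; norm_num; rfl
  have hQy : fderiv ℝ (Qf f) p (0,1) = pdy (pdy f) p := by rw [hQv]; norm_num; rfl
  have hfxx : fderiv ℝ (pdx f) p (1,0) = pdx (pdx f) p := rfl
  have hfxy : fderiv ℝ (pdx f) p (0,1) = pdx (pdy f) p := by rw [← hsy]; rfl
  have hfyx : fderiv ℝ (pdy f) p (1,0) = pdx (pdy f) p := rfl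
  have hfyy : fderiv ℝ (pdy f) p (0,1) = pdy (pdy f) p := rfl
  have hfx0 : pdx f p = Pf f p - p.2/2 := by show pdx f p = (pdx f p + p.2/2) - p.2/2; ring
  have hfy0 : pdy f p = Qf f p + p.1/2 := by show pdy f p = (pdy f p - p.1/2) + p.1/2; ring
  have hEfp : Ef f p = 1 + Pf f p^2 := rfl
  have hFfp : Ff f p = Pf f p * Qf f p := rfl
  have hGfp : Gf f p = 1 + Qf f p^2 := rfl
  -- global facts about pdx/pdy of coordinates
  have g1x : ∀ q : ℝ × ℝ, pdx (fun z : ℝ × ℝ => z.1) q = 1 := by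
    intro q; show fderiv ℝ (fun z : ℝ × ℝ => z.1) q (1,0) = 1; rw [fdv_fst]
  have g1y : ∀ q : ℝ × ℝ, pdy (fun z : ℝ × ℝ => z.1) q = 0 := by
    intro q; show fderiv ℝ (fun z : ℝ × ℝ => z.1) q (0,1) = 0; rw [fdv_fst]
  have g2x : ∀ q : ℝ × ℝ, pdx (fun z : ℝ × ℝ => z.2) q = 0 := by
    intro q; show fderiv ℝ (fun z : ℝ × ℝ => z.2) q (1,0) = 0; rw [fdv_snd]
  have g2y : ∀ q : ℝ × ℝ, pdy (fun z : ℝ × ℝ => z.2) q = 1 := by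
    intro q; show fderiv ℝ (fun z : ℝ × ℝ => z.2) q (0,1) = 1; rw [fdv_snd]
  refine ⟨?_, ?_, ?_⟩
  · -- φ = x
    have hA1 : (fun q => (Gf f q * pdx (fun z : ℝ × ℝ => z.1) q
        - Ff f q * pdy (fun z : ℝ × ℝ => z.1) q) / Wf f q) = fun q => Gf f q / Wf f q := by
      funext q; rw [g1x q, g1y q]; ring
    have hB1 : (fun q => (-(Ff f q) * pdx (fun z : ℝ × ℝ => z.1) q
        + Ef f q * pdy (fun z : ℝ × ℝ => z.1) q) / Wf f q) = fun q => -(Ff f q) / Wf f q := by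
      funext q; rw [g1x q, g1y q]; ring
    unfold lapS
    rw [hA1, hB1]
    have d1 : pdx (fun q => Gf f q / Wf f q) p
        = (fderiv ℝ (Gf f) p (1,0) * Wf f p - Gf f p * fderiv ℝ (Wf f) p (1,0)) / Wf f p ^ 2 :=
      fdv_div dG dW hWne
    have d2 : pdy (fun q => -(Ff f q) / Wf f q) p
        = (fderiv ℝ (fun q => -(Ff f q)) p (0,1) * Wf f p
            - (-(Ff f p)) * fderiv ℝ (Wf f) p (0,1)) / Wf f p ^ 2 :=
      fdv_div dF.neg dW hWne
    have d3 : fderiv ℝ (fun q => -(Ff f q)) p (0,1) = -(fderiv ℝ (Ff f) p (0,1)) := by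
      rw [fderiv_fun_neg]; rfl
    rw [d1, d2, d3, hGv, hFv, hWv, hWv, hPx, hPy, hQx, hQy, hFfp, hGfp]
    field_simp
    ring
  · -- φ = y
    have hA2 : (fun q => (Gf f q * pdx (fun z : ℝ × ℝ => z.2) q
        - Ff f q * pdy (fun z : ℝ × ℝ => z.2) q) / Wf f q) = fun q => -(Ff f q) / Wf f q := by
      funext q; rw [g2x q, g2y q]; ring
    have hB2 : (fun q => (-(Ff f q) * pdx (fun z : ℝ × ℝ => z.2) q
        + Ef f q * pdy (fun z : ℝ × ℝ => z.2) q) / Wf f q) = fun q => Ef f q / Wf f q := by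
      funext q; rw [g2x q, g2y q]; ring
    unfold lapS
    rw [hA2, hB2]
    have d1 : pdx (fun q => -(Ff f q) / Wf f q) p
        = (fderiv ℝ (fun q => -(Ff f q)) p (1,0) * Wf f p
            - (-(Ff f p)) * fderiv ℝ (Wf f) p (1,0)) / Wf f p ^ 2 :=
      fdv_div dF.neg dW hWne
    have d2 : pdy (fun q => Ef f q / Wf f q) p
        = (fderiv ℝ (Ef f) p (0,1) * Wf f p - Ef f p * fderiv ℝ (Wf f) p (0,1)) / Wf f p ^ 2 :=
      fdv_div dE dW hWne
    have d3 : fderiv ℝ (fun q => -(Ff f q)) p (1,0) = -(fderiv ℝ (Ff f) p (1,0)) := by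
      rw [fderiv_fun_neg]; rfl
    rw [d1, d2, d3, hEv, hFv, hWv, hWv, hPx, hPy, hQx, hQy, hEfp, hFfp]
    field_simp
    ring
  · -- φ = f
    unfold lapS
    have dn1 : DifferentiableAt ℝ (fun q => Gf f q * pdx f q - Ff f q * pdy f q) p :=
      (dG.mul dfx).sub (dF.mul dfy)
    have dn2 : DifferentiableAt ℝ (fun q => -(Ff f q) * pdx f q + Ef f q * pdy f q) p :=
      (dF.neg.mul dfx).add (dE.mul dfy)
    have d1 : pdx (fun q => (Gf f q * pdx f q - Ff f q * pdy f q) / Wf f q) p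
        = (fderiv ℝ (fun q => Gf f q * pdx f q - Ff f q * pdy f q) p (1,0) * Wf f p
            - (Gf f p * pdx f p - Ff f p * pdy f p) * fderiv ℝ (Wf f) p (1,0)) / Wf f p ^ 2 :=
      fdv_div dn1 dW hWne
    have d2 : pdy (fun q => (-(Ff f q) * pdx f q + Ef f q * pdy f q) / Wf f q) p
        = (fderiv ℝ (fun q => -(Ff f q) * pdx f q + Ef f q * pdy f q) p (0,1) * Wf f p
            - (-(Ff f p) * pdx f p + Ef f p * pdy f p) * fderiv ℝ (Wf f) p (0,1)) / Wf f p ^ 2 :=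
      fdv_div dn2 dW hWne
    have d3 : ∀ v : ℝ × ℝ, fderiv ℝ (fun q => Gf f q * pdx f q - Ff f q * pdy f q) p v
        = (Gf f p * fderiv ℝ (pdx f) p v + pdx f p * fderiv ℝ (Gf f) p v)
          - (Ff f p * fderiv ℝ (pdy f) p v + pdy f p * fderiv ℝ (Ff f) p v) := by
      intro v
      rw [fdv_sub (a := fun q => Gf f q * pdx f q) (b := fun q => Ff f q * pdy f q) (dG.mul dfx) (dF.mul dfy), fdv_mul dG dfx, fdv_mul dF dfy]
    have d4 : ∀ v : ℝ × ℝ, fderiv ℝ (fun q => -(Ff f q) * pdx f q + Ef f q * pdy f q) p v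
        = (-(Ff f p) * fderiv ℝ (pdx f) p v + pdx f p * (-(fderiv ℝ (Ff f) p v)))
          + (Ef f p * fderiv ℝ (pdy f) p v + pdy f p * fderiv ℝ (Ef f) p v) := by
      intro v
      rw [fdv_add (a := fun q => -(Ff f q) * pdx f q) (b := fun q => Ef f q * pdy f q) (dF.neg.mul dfx) (dE.mul dfy), fdv_mul (a := fun q => -(Ff f q)) dF.neg dfx, fdv_mul dE dfy]
      have : fderiv ℝ (fun q => -(Ff f q)) p v = -(fderiv ℝ (Ff f) p v) := by
        rw [fderiv_fun_neg]; rfl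
      rw [this]
    simp only [d1, d2, d3, d4, hEv, hFv, hGv, hWv, hPx, hPy, hQx, hQy,
      hfxx, hfxy, hfyx, hfyy, hEfp, hFfp, hGfp, hfx0, hfy0]
    field_simp
    ring

/-- Pure algebra core. -/
lemma key_alg (x y P Q r s t W u ux l1 l3 fv : ℝ)
    (hW : W ^ 2 = 1 + P ^ 2 + Q ^ 2) (hWpos : 0 < W)
    (hQ : Q = -(u * P)) (hP : P ≠ 0)
    (hs : s - 1/2 + ux * P + u * r = 0)
    (ht : t + (-(u * ux)) * P + u * (s + 1/2) = 0)
    (e1 : l1 * x * W ^ 4 =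
      -((2*Q*(s-1/2)) * W^2 - (1+Q^2)*(P*r+Q*(s-1/2))
        + (-((s+1/2)*Q+P*t)) * W^2 + (P*Q)*(P*(s+1/2)+Q*t)))
    (e2 : 0 =
      -((-(r*Q+P*(s-1/2))) * W^2 + (P*Q)*(P*r+Q*(s-1/2))
        + (2*P*(s+1/2)) * W^2 - (1+P^2)*(P*(s+1/2)+Q*t)))
    (e3 : l3 * fv * W ^ 4 =
      -(((2*Q*(s-1/2))*(P-y/2) + (1+Q^2)*r - (r*Q+P*(s-1/2))*(Q+x/2) - (P*Q)*s) * W^2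
        - ((1+Q^2)*(P-y/2) - (P*Q)*(Q+x/2)) * (P*r+Q*(s-1/2))
        + ((-((s+1/2)*Q+P*t))*(P-y/2) - (P*Q)*s + (2*P*(s+1/2))*(Q+x/2) + (1+P^2)*t) * W^2
        - ((-(P*Q))*(P-y/2) + (1+P^2)*(Q+x/2)) * (P*(s+1/2)+Q*t))) :
    u * (r + t) = -(1 + P ^ 2 * (1 + u ^ 2)) ∧
    (l1 = 0 → False) ∧
    (r + t = -(1/2) * (l1 * (x*y) + 2 * l3 * fv) * (1 + P^2*(1+u^2))^2) := by
  have hW4 : W ^ 4 = (1 + P^2 + Q^2)^2 := by rw [show (W:ℝ)^4 = (W^2)^2 by ring, hW]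
  set K : ℝ := (1+Q^2)*r - 2*P*Q*s + (1+P^2)*t with hKdef
  have n1 : l1 * x * W ^ 4 = P*K + Q*W^2 := by
    rw [e1]; linear_combination (Q/2 - Q*s + P*t) * hW
  have n2 : (0:ℝ) = Q*K - P*W^2 := by
    rw [e2]; linear_combination (Q*r - P/2 - P*s) * hW
  have n3 : l3 * fv * W ^ 4 = -K - (y/2)*(l1 * x * W^4) + (x/2)*(0:ℝ) := by
    rw [e3]; linear_combination (-t - r) * hW + (y/2) * e1 - (x/2) * e2
  clear e1 e2 e3
  have hK : K = r + t := by
    rw [hKdef, hQ]; linear_combination (P^2*u) * hs + P^2 * ht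
  have hW2' : W ^ 2 = 1 + P^2*(1+u^2) := by rw [hW, hQ]; ring
  -- from n2 : Q(r+t) = P W^2, i.e. u(r+t) = -W^2
  have hA : u * (r + t) = -(W^2) := by
    have h0 : P * (u * (r+t) + W^2) = P * 0 := by
      rw [hQ] at n2; rw [hK] at n2; linear_combination n2
    have := mul_left_cancel₀ hP h0
    linarith [this]
  have gA : u * (r + t) = -(1 + P ^ 2 * (1 + u ^ 2)) := by rw [hA, hW2']
  refine ⟨gA, ?_, ?_⟩
  · intro hl1
    -- P(r+t) + Q W^2 = 0, Q = -uP  ⇒ r+t = u W^2 ⇒ u^2 W^2 = -W^2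
    have h0 : P * ((r+t) - u * W^2) = P * 0 := by
      rw [hl1, hK, hQ] at n1; linear_combination -n1
    have h1 : (r+t) = u * W^2 := by have := mul_left_cancel₀ hP h0; linarith
    have h2 : u^2 * W^2 = -(W^2) := by
      have := hA; rw [h1] at this; linear_combination this
    nlinarith [sq_nonneg u, sq_nonneg W, hWpos]
  · rw [hK] at n3
    have hWne : (W:ℝ) ≠ 0 := ne_of_gt hWpos
    linear_combination n3 - (1/2)*(l1*(x*y) + 2*l3*fv) * (W^2 + (1 + P^2*(1+u^2))) * hW2'

lemma ruled_derivs (f u : ℝ × ℝ → ℝ) {p : ℝ × ℝ} (hfp : ContDiffAt ℝ (⊤ : ℕ∞) f p)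
    (hup : ContDiffAt ℝ (⊤ : ℕ∞) u p)
    (hev : ∀ᶠ q in nhds p, Qf f q = -(u q) * Pf f q) :
    (pdx (pdy f) p - 1/2 + pdx u p * Pf f p + u p * pdx (pdx f) p = 0) ∧
    (pdy (pdy f) p + pdy u p * Pf f p + u p * (pdx (pdy f) p + 1/2) = 0) := by
  have lei1 : (1:WithTop ℕ∞) ≤ ((⊤:ℕ∞):WithTop ℕ∞) := by exact_mod_cast le_inftop
  have dfx : DifferentiableAt ℝ (pdx f) p := (contDiffAt_pdx hfp).differentiableAt (by simp)
  have dfy : DifferentiableAt ℝ (pdy f) p := (contDiffAt_pdy hfp).differentiableAt (by simp)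
  have dfst : DifferentiableAt ℝ (fun q : ℝ × ℝ => q.1) p := differentiableAt_fst
  have dsnd : DifferentiableAt ℝ (fun q : ℝ × ℝ => q.2) p := differentiableAt_snd
  have dsnd2 : DifferentiableAt ℝ (fun q : ℝ × ℝ => q.2 / 2) p := by fun_prop
  have dfst2 : DifferentiableAt ℝ (fun q : ℝ × ℝ => q.1 / 2) p := by fun_prop
  have dP : DifferentiableAt ℝ (Pf f) p := dfx.add dsnd2
  have dQ : DifferentiableAt ℝ (Qf f) p := dfy.sub dfst2
  have du : DifferentiableAt ℝ u p := hup.differentiableAt (by simp)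
  have hsy : pdy (pdx f) p = pdx (pdy f) p := pdx_pdy_symm hfp
  have hPv : ∀ v : ℝ × ℝ, fderiv ℝ (Pf f) p v = fderiv ℝ (pdx f) p v + v.2/2 := by
    intro v
    show fderiv ℝ (fun q => pdx f q + q.2/2) p v = _
    rw [fdv_add dfx dsnd2, fdv_div_const dsnd 2, fdv_snd]
  have hQv : ∀ v : ℝ × ℝ, fderiv ℝ (Qf f) p v = fderiv ℝ (pdy f) p v - v.1/2 := by
    intro v
    show fderiv ℝ (fun q => pdy f q - q.1/2) p v = _
    rw [fdv_sub dfy dfst2, fdv_div_const dfst 2, fdv_fst]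
  have heq : (fun q => Qf f q + u q * Pf f q) =ᶠ[nhds p] (fun _ => (0:ℝ)) := by
    filter_upwards [hev] with q hq
    rw [hq]; ring
  have h0 : ∀ v : ℝ × ℝ, fderiv ℝ (fun q => Qf f q + u q * Pf f q) p v = 0 := by
    intro v
    rw [heq.fderiv_eq, fderiv_fun_const]
    simp
  have hval : ∀ v : ℝ × ℝ, fderiv ℝ (Qf f) p v
      + (u p * fderiv ℝ (Pf f) p v + Pf f p * fderiv ℝ u p v) = 0 := by
    intro v
    rw [← fdv_mul du dP, ← fdv_add (b := fun q => u q * Pf f q) dQ (du.mul dP)]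
    exact h0 v
  constructor
  · have h := hval (1,0)
    rw [hQv, hPv] at h
    have e1 : fderiv ℝ (pdy f) p (1,0) = pdx (pdy f) p := rfl
    have e2 : fderiv ℝ (pdx f) p (1,0) = pdx (pdx f) p := rfl
    have e3 : fderiv ℝ u p (1,0) = pdx u p := rfl
    rw [e1, e2, e3] at h
    norm_num at h ⊢
    linarith
  · have h := hval (0,1)
    rw [hQv, hPv] at h
    have e1 : fderiv ℝ (pdy f) p (0,1) = pdy (pdy f) p := rfl
    have e2 : fderiv ℝ (pdx f) p (0,1) = pdx (pdy f) p := by rw [← hsy]; rfl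
    have e3 : fderiv ℝ u p (0,1) = pdy u p := rfl
    rw [e1, e2, e3] at h
    norm_num at h ⊢
    linarith


/-- **Second family, case `λ₃ ≠ 0`, `λ₂ = 0`** (equation (3.11)): under the ruled hypothesis
`Q = −uP`, `u_y + u·u_x = 0`, if `Δx = λ₁x`, `Δy = λ₂y`, `Δf = λ₃f` on `D` with `λ₃ ≠ 0`,
`λ₂ = 0`, and `P` nowhere zero on `D`, then `uH₁ = −W`, i.e.
`u(f_xx + f_yy) = −(1 + P²(1 + u²))`, the constant `λ₁` is nonzero, and `f` satisfies
`f_xx + f_yy = −½(λ₁xy + 2λ₃f)(1 + (f_x + y/2)²(1 + u²))²` on `D`. -/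
theorem finite_type_S2_case_l3_ne_zero_l2_zero
    (D : Set (ℝ × ℝ)) (hD : IsOpen D) (hDne : D.Nonempty)
    (f : ℝ × ℝ → ℝ) (hf : ContDiffOn ℝ (⊤ : ℕ∞) f D)
    (u : ℝ × ℝ → ℝ) (hu : ContDiffOn ℝ (⊤ : ℕ∞) u D)
    (hruled : ∀ p ∈ D, Qf f p = -(u p) * Pf f p)
    (hburgers : ∀ p ∈ D, pdy u p + u p * pdx u p = 0)
    (l1 l2 l3 : ℝ)
    (h1 : ∀ p ∈ D, lapS f (fun q => q.1) p = l1 * p.1)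
    (h2 : ∀ p ∈ D, lapS f (fun q => q.2) p = l2 * p.2)
    (h3 : ∀ p ∈ D, lapS f f p = l3 * f p)
    (hl3 : l3 ≠ 0) (hl2 : l2 = 0)
    (hP : ∀ p ∈ D, Pf f p ≠ 0) :
    (∀ p ∈ D,
      u p * H1f f p = -(Wf f p) ∧
      u p * (pdx (pdx f) p + pdy (pdy f) p) = -(1 + Pf f p ^ 2 * (1 + u p ^ 2))) ∧
    l1 ≠ 0 ∧
    (∀ p ∈ D,
      pdx (pdx f) p + pdy (pdy f) p =
        -(1 / 2) * (l1 * (p.1 * p.2) + 2 * l3 * f p) *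
          (1 + (pdx f p + p.2 / 2) ^ 2 * (1 + u p ^ 2)) ^ 2) := by
  have main : ∀ p ∈ D,
      (u p * (pdx (pdx f) p + pdy (pdy f) p) = -(1 + Pf f p ^ 2 * (1 + u p ^ 2))) ∧
      (l1 = 0 → False) ∧
      (pdx (pdx f) p + pdy (pdy f) p =
        -(1/2) * (l1 * (p.1 * p.2) + 2 * l3 * f p)
          * (1 + Pf f p ^ 2 * (1 + u p ^ 2)) ^ 2) := by
    intro p hp
    have hnd : D ∈ nhds p := hD.mem_nhds hp
    have hfc : ContDiffAt ℝ (⊤ : ℕ∞) f p := hf.contDiffAt hnd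
    have huc : ContDiffAt ℝ (⊤ : ℕ∞) u p := hu.contDiffAt hnd
    have hgpos : (0:ℝ) < 1 + Pf f p^2 + Qf f p^2 := by positivity
    have hWpos : 0 < Wf f p := Real.sqrt_pos.mpr hgpos
    have hW : Wf f p ^ 2 = 1 + Pf f p ^ 2 + Qf f p ^ 2 := Real.sq_sqrt hgpos.le
    have hQ : Qf f p = -(u p * Pf f p) := by rw [hruled p hp]; ring
    have hev : ∀ᶠ q in nhds p, Qf f q = -(u q) * Pf f q := by
      filter_upwards [hnd] with q hq
      exact hruled q hq
    obtain ⟨hs, ht0⟩ := ruled_derivs f u hfc huc hev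
    have hb : pdy u p = -(u p * pdx u p) := by have := hburgers p hp; linarith
    rw [hb] at ht0
    obtain ⟨r1, r2, r3⟩ := raw_eqs f hfc
    rw [h1 p hp] at r1
    rw [h2 p hp, hl2] at r2
    rw [h3 p hp] at r3
    have e2 : (0:ℝ) = -((-(pdx (pdx f) p*Qf f p + Pf f p*(pdx (pdy f) p - 1/2))) * Wf f p^2
        + (Pf f p*Qf f p)*(Pf f p*pdx (pdx f) p + Qf f p*(pdx (pdy f) p - 1/2))
        + (2*Pf f p*(pdx (pdy f) p + 1/2)) * Wf f p^2
        - (1+Pf f p^2)*(Pf f p*(pdx (pdy f) p + 1/2) + Qf f p*pdy (pdy f) p)) := by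
      linear_combination r2
    obtain ⟨gA, gB, gC⟩ := key_alg p.1 p.2 (Pf f p) (Qf f p) (pdx (pdx f) p) (pdx (pdy f) p)
      (pdy (pdy f) p) (Wf f p) (u p) (pdx u p) l1 l3 (f p)
      hW hWpos hQ (hP p hp) hs ht0 r1 e2 r3
    exact ⟨gA, gB, gC⟩
  refine ⟨?_, ?_, ?_⟩
  · intro p hp
    have h := (main p hp).1
    refine ⟨?_, h⟩
    have hgpos : (0:ℝ) < 1 + Pf f p^2 + Qf f p^2 := by positivity
    have hWpos : 0 < Wf f p := Real.sqrt_pos.mpr hgpos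
    have hW : Wf f p ^ 2 = 1 + Pf f p ^ 2 + Qf f p ^ 2 := Real.sq_sqrt hgpos.le
    have hQ : Qf f p = -(u p * Pf f p) := by rw [hruled p hp]; ring
    have hWne : Wf f p ≠ 0 := ne_of_gt hWpos
    have h2 : u p * (pdx (pdx f) p + pdy (pdy f) p) = -(Wf f p ^ 2) := by
      rw [h, hW, hQ]; ring
    show u p * ((pdx (pdx f) p + pdy (pdy f) p) / Wf f p) = -(Wf f p)
    rw [← mul_div_assoc, div_eq_iff hWne]
    linear_combination h2
  · obtain ⟨p0, hp0⟩ := hDne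
    intro h
    exact (main p0 hp0).2.1 h
  · intro p hp
    exact (main p hp).2.2
end
end
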